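/- Let A(k), k ≥ 1, be n×n row-stochastic matrices satisfying: (1) there is α > 0 with every positive entry of every A(k) at least α; (2) for every k there is K ≥ k with all entries of Σ_{k'=k}^{K} A(k')···A(k) positive; (3) each A(k) is completely reducible; (4) there is a common aperiodic digraph H without sinks on {1,…,n} that is a subgraph of every G(A(k)). Then there exists K such that every entry of P(k) = A(k)···A(1) is at least α^{n(n²−2n+3)} for all k ≥ K. -/

import Mathlib

open Matrix Filter

/-- Row-stochastic matrix: nonnegative entries and row sums equal to 1. -/
def Stochastic {n : ℕ} (A : Matrix (Fin n) (Fin n) ℝ) : Prop :=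
  (∀ i j, 0 ≤ A i j) ∧ ∀ i, ∑ j, A i j = 1

/-- There is a walk of length `k` from `i` to `j` in the digraph with edge relation `E`. -/
def HasWalk {n : ℕ} (E : Fin n → Fin n → Prop) (i j : Fin n) (k : ℕ) : Prop :=
  ∃ f : ℕ → Fin n, f 0 = i ∧ f k = j ∧ ∀ m < k, E (f m) (f (m + 1))

/-- The gcd of the lengths of closed walks at `i` (which all stay inside the strongly
connected component of `i`) is 1.  Equivalently, the component of `i` is aperiodic. -/
def AperiodicAt {n : ℕ} (E : Fin n → Fin n → Prop) (i : Fin n) : Prop :=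
  ∀ d : ℕ, (∀ k, 0 < k → HasWalk E i i k → d ∣ k) → d = 1

/-- `backProd A l m = A (l+m) ⬝ A (l+m-1) ⬝ ⋯ ⬝ A (l+1)`, so that
`backProd A l (k-l)` is the partial product `P(k,l)` and `backProd A 0 k = P(k)`. -/
def backProd {n : ℕ} (A : ℕ → Matrix (Fin n) (Fin n) ℝ) (l : ℕ) : ℕ → Matrix (Fin n) (Fin n) ℝ
  | 0 => 1
  | m + 1 => A (l + m + 1) * backProd A l m

/-- Vector seminorm: sup-norm distance to the line spanned by the all-ones vector. -/
noncomputable def sn {n : ℕ} (x : Fin n → ℝ) : ℝ :=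
  ⨅ c : ℝ, ‖x - Function.const (Fin n) c‖

/-- Induced matrix seminorm `‖A‖ = sup { ‖Ax‖/‖x‖ : ‖x‖ ≠ 0 }`. -/
noncomputable def msn {n : ℕ} (A : Matrix (Fin n) (Fin n) ℝ) : ℝ :=
  sSup {r : ℝ | ∃ x : Fin n → ℝ, sn x ≠ 0 ∧ r = sn (A.mulVec x) / sn x}

/-- `mu P j` = minimum of the positive entries of column `j` of `P`. -/
noncomputable def mu {n : ℕ} (P : Matrix (Fin n) (Fin n) ℝ) (j : Fin n) : ℝ :=
  sInf {v : ℝ | ∃ i, 0 < P i j ∧ P i j = v}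

/-- Completely reducible: whenever `A i j > 0` there is a directed walk from `j`
back to `i` in `G(A)`; i.e. no edges between distinct strongly connected components. -/
def CompRed {n : ℕ} (A : Matrix (Fin n) (Fin n) ℝ) : Prop :=
  ∀ i j, 0 < A i j → ∃ k, HasWalk (fun a b => 0 < A a b) j i k

namespace S15
variable {n : ℕ} {E : Fin n → Fin n → Prop}

lemma hw_refl (i : Fin n) : HasWalk E i i 0 :=
  ⟨fun _ => i, rfl, rfl, fun m hm => absurd hm (Nat.not_lt_zero m)⟩

lemma hw_single {i j : Fin n} (h : E i j) : HasWalk E i j 1 := by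
  refine ⟨fun m => if m = 0 then i else j, by simp, by simp, ?_⟩
  intro m hm
  interval_cases m
  simpa using h

lemma hw_trans {i j k : Fin n} {a b : ℕ} (h1 : HasWalk E i j a) (h2 : HasWalk E j k b) :
    HasWalk E i k (a + b) := by
  obtain ⟨f, hf0, hfa, hfe⟩ := h1
  obtain ⟨g, hg0, hgb, hge⟩ := h2
  refine ⟨fun m => if m < a then f m else g (m - a), ?_, ?_, ?_⟩
  · by_cases h : 0 < a
    · simp [h, hf0]
    · have ha : a = 0 := by omega
      subst ha
      simp [hg0, ← hf0, hfa]
  · have : ¬ (a + b < a) := by omega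
    simp only [this, if_false]
    rw [Nat.add_sub_cancel_left, hgb]
  · intro m hm
    by_cases h : m < a
    · by_cases h' : m + 1 < a
      · simpa [h, h'] using hfe m h
      · have : m + 1 = a := by omega
        have e1 : (if m < a then f m else g (m - a)) = f m := by simp [h]
        have e2 : (if m + 1 < a then f (m+1) else g (m + 1 - a)) = f (m+1) := by
          simp only [h', if_false, this, Nat.sub_self, hg0, ← hfa]
          simp
        show E (if m < a then f m else g (m - a)) (if m + 1 < a then f (m+1) else g (m + 1 - a))
        rw [e1, e2]
        exact hfe m h
    · have h' : ¬ (m + 1 < a) := by omega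
      show E (if m < a then f m else g (m - a)) (if m + 1 < a then f (m+1) else g (m + 1 - a))
      simp only [h, h', if_false]
      have : m + 1 - a = (m - a) + 1 := by omega
      rw [this]
      exact hge (m - a) (by omega)

lemma hw_congr {i j : Fin n} {a b : ℕ} (h : HasWalk E i j a) (hab : a = b) :
    HasWalk E i j b := hab ▸ h

/-- subwalk from position p to position q of an explicit walk -/
lemma hw_sub (f : ℕ → Fin n) {L : ℕ} (he : ∀ m < L, E (f m) (f (m + 1)))
    {p q : ℕ} (hpq : p ≤ q) (hq : q ≤ L) : HasWalk E (f p) (f q) (q - p) := by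
  refine ⟨fun m => f (p + m), rfl, ?_, ?_⟩
  · show f (p + (q - p)) = f q
    rw [Nat.add_sub_cancel' hpq]
  · intro m hm
    show E (f (p + m)) (f (p + (m + 1)))
    have : p + (m + 1) = (p + m) + 1 := by omega
    rw [this]
    exact he (p + m) (by omega)

/-- splice out a repeated segment -/
lemma hw_splice (f : ℕ → Fin n) {L : ℕ} {i j : Fin n} (h0 : f 0 = i) (hL : f L = j)
    (he : ∀ m < L, E (f m) (f (m + 1))) {p q : ℕ} (hpq : p ≤ q) (hq : q ≤ L)
    (heq : f p = f q) : HasWalk E i j (L - (q - p)) := by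
  refine ⟨fun m => if m < p then f m else f (m + (q - p)), ?_, ?_, ?_⟩
  · by_cases h : 0 < p
    · simp [h, h0]
    · have hp0 : p = 0 := by omega
      subst hp0
      show f (0 + (q - 0)) = i
      rw [Nat.zero_add, Nat.sub_zero, ← heq, h0]
  · have h1 : ¬ (L - (q - p) < p) := by omega
    have h2 : L - (q - p) + (q - p) = L := by omega
    simp only [h1, if_false, h2, hL]
  · intro m hm
    by_cases h : m < p
    · by_cases h' : m + 1 < p
      · simpa [h, h'] using he m (by omega)
      · have hmp : m + 1 = p := by omega
        have e1 : (if m < p then f m else f (m + (q - p))) = f m := by simp [h]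
        have e2 : (if m + 1 < p then f (m+1) else f (m + 1 + (q - p))) = f (m + 1) := by
          have h2 : m + 1 + (q - p) = q := by omega
          simp only [h', if_false, h2, ← heq, hmp]
          simp only [Nat.lt_irrefl, if_false]
          rw [Nat.add_sub_cancel' hpq, ← heq]
        show E (if m < p then f m else f (m + (q - p))) (if m + 1 < p then f (m+1) else f (m + 1 + (q - p)))
        rw [e1, e2]
        exact he m (by omega)
    · have h' : ¬ (m + 1 < p) := by omega
      show E (if m < p then f m else f (m + (q - p))) (if m + 1 < p then f (m+1) else f (m + 1 + (q - p)))
      simp only [h, h', if_false]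
      have : m + 1 + (q - p) = (m + (q - p)) + 1 := by omega
      rw [this]
      exact he (m + (q - p)) (by omega)

/-- iterate a closed walk -/
lemma hw_iterate {w : Fin n} {a : ℕ} (h : HasWalk E w w a) (t : ℕ) :
    HasWalk E w w (t * a) := by
  induction t with
  | zero => simpa using hw_refl w
  | succ t ih => exact hw_congr (hw_trans ih h) (by ring)


section Classes
attribute [local instance] Classical.propDecidable

def Reach (E : Fin n → Fin n → Prop) (u v : Fin n) : Prop := ∃ L, HasWalk E u v L

def SameC (E : Fin n → Fin n → Prop) (u v : Fin n) : Prop := Reach E u v ∧ Reach E v u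

lemma reach_refl (u : Fin n) : Reach E u u := ⟨0, hw_refl u⟩

lemma reach_trans {u v w : Fin n} (h1 : Reach E u v) (h2 : Reach E v w) : Reach E u w := by
  obtain ⟨a, ha⟩ := h1; obtain ⟨b, hb⟩ := h2; exact ⟨a + b, hw_trans ha hb⟩

lemma sameC_refl (u : Fin n) : SameC E u u := ⟨reach_refl u, reach_refl u⟩

lemma sameC_symm {u v : Fin n} (h : SameC E u v) : SameC E v u := ⟨h.2, h.1⟩

lemma sameC_trans {u v w : Fin n} (h1 : SameC E u v) (h2 : SameC E v w) : SameC E u w :=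
  ⟨reach_trans h1.1 h2.1, reach_trans h2.2 h1.2⟩

noncomputable def cls (E : Fin n → Fin n → Prop) (v : Fin n) : Finset (Fin n) :=
  Finset.univ.filter (fun u => SameC E u v)

lemma mem_cls {u v : Fin n} : u ∈ cls E v ↔ SameC E u v := by simp [cls]

lemma self_mem_cls (v : Fin n) : v ∈ cls E v := mem_cls.2 (sameC_refl v)

lemma cls_card_pos (v : Fin n) : 0 < (cls E v).card :=
  Finset.card_pos.2 ⟨v, self_mem_cls v⟩

/-- vertices on a walk between class members are in the class -/
lemma walk_mem_cls {u u' v : Fin n} (hu : SameC E u v) (hu' : SameC E u' v)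
    (f : ℕ → Fin n) {L : ℕ} (h0 : f 0 = u) (hL : f L = u')
    (he : ∀ m < L, E (f m) (f (m + 1))) {i : ℕ} (hi : i ≤ L) : SameC E (f i) v := by
  have r1 : Reach E (f i) u' := ⟨L - i, by have := hw_sub f he hi (le_refl L); rwa [hL] at this⟩
  have r2 : Reach E u (f i) := ⟨i - 0, by have := hw_sub f he (Nat.zero_le i) hi; rwa [h0] at this⟩
  exact ⟨reach_trans r1 hu'.1, reach_trans hu.2 r2⟩

lemma exists_closed {v : Fin n} (hap : AperiodicAt E v) :
    ∃ k, 0 < k ∧ HasWalk E v v k := by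
  by_contra h
  push_neg at h
  have : (0 : ℕ) = 1 := hap 0 (fun k hk hw => absurd hw (h k hk))
  exact absurd this (by norm_num)

/-- every vertex has an out-neighbour inside its own class -/
lemma exists_nbr_in_cls {u : Fin n} (hap : AperiodicAt E u) :
    ∃ w, E u w ∧ SameC E w u := by
  obtain ⟨k, hk, f, h0, hL, he⟩ := exists_closed hap
  refine ⟨f 1, by rw [← h0]; exact he 0 hk, ?_⟩
  exact walk_mem_cls (sameC_refl u) (sameC_refl u) f h0 hL he hk

/-- pigeonhole: a walk whose first c+1 vertices lie in a set of size c has a repeat -/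
lemma walk_repeat {c : ℕ} (S : Finset (Fin n)) (hcard : S.card = c) (f : ℕ → Fin n)
    (hf : ∀ i ≤ c, f i ∈ S) : ∃ p q, p < q ∧ q ≤ c ∧ f p = f q := by
  have hlt : Fintype.card { x // x ∈ S } < Fintype.card (Fin (c + 1)) := by
    rw [Fintype.card_coe, hcard, Fintype.card_fin]; omega
  obtain ⟨a, b, hab, heq⟩ := Fintype.exists_ne_map_eq_of_card_lt
    (fun i : Fin (c + 1) => (⟨f i, hf i (by omega)⟩ : { x // x ∈ S })) hlt
  have heq' : f a = f b := congrArg Subtype.val heq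
  rcases lt_or_gt_of_ne (fun h : (a : ℕ) = (b : ℕ) => hab (Fin.ext h)) with h | h
  · exact ⟨a, b, h, by omega, heq'⟩
  · exact ⟨b, a, h, by omega, heq'.symm⟩

/-- distance within a class is at most card - 1 -/
lemma exists_short_walk {u u' v : Fin n} (hu : SameC E u v) (hu' : SameC E u' v) :
    ∃ d, d ≤ (cls E v).card - 1 ∧ HasWalk E u u' d := by
  set c := (cls E v).card with hc
  have hex : ∃ L, HasWalk E u u' L := reach_trans hu.1 hu'.2
  classical
  let L0 := Nat.find hex
  have hw0 : HasWalk E u u' L0 := Nat.find_spec hex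
  refine ⟨L0, ?_, hw0⟩
  by_contra hbig
  push_neg at hbig
  have hL0c : c ≤ L0 := by have := cls_card_pos (E := E) v; omega
  obtain ⟨f, h0, hL, he⟩ := hw0
  obtain ⟨p, q, hpq, hqc, heq⟩ := walk_repeat (cls E v) rfl f
    (fun i hi => mem_cls.2 (walk_mem_cls hu hu' f h0 hL he (by omega)))
  have hw' : HasWalk E u u' (L0 - (q - p)) := hw_splice f h0 hL he (le_of_lt hpq) (by omega) heq
  have := Nat.find_min hex (m := L0 - (q - p)) (by omega)
  exact this hw'

/-- the finset of short closed-walk lengths in the class of v -/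
noncomputable def cw (E : Fin n → Fin n → Prop) (v : Fin n) : Finset ℕ :=
  (Finset.Icc 1 ((cls E v).card)).filter (fun a => ∃ w, SameC E w v ∧ HasWalk E w w a)

lemma mem_cw {v : Fin n} {a : ℕ} :
    a ∈ cw E v ↔ (1 ≤ a ∧ a ≤ (cls E v).card) ∧ ∃ w, SameC E w v ∧ HasWalk E w w a := by
  simp [cw, Finset.mem_filter, Finset.mem_Icc, and_assoc]

/-- extract a short closed walk from any closed walk at a class member -/
lemma exists_short_closed {v w : Fin n} (hw : SameC E w v) {k : ℕ} (hk : 0 < k)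
    (hwalk : HasWalk E w w k) : (cw E v).Nonempty := by
  set c := (cls E v).card with hc
  obtain ⟨f, h0, hL, he⟩ := hwalk
  by_cases hkc : k ≤ c
  · exact ⟨k, mem_cw.2 ⟨⟨hk, hkc⟩, w, hw, ⟨f, h0, hL, he⟩⟩⟩
  · obtain ⟨p, q, hpq, hqc, heq⟩ := walk_repeat (cls E v) rfl f
      (fun i hi => mem_cls.2 (walk_mem_cls hw hw f h0 hL he (by omega)))
    have hsub : HasWalk E (f p) (f q) (q - p) := hw_sub f he (le_of_lt hpq) (by omega)
    rw [← heq] at hsub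
    exact ⟨q - p, mem_cw.2 ⟨⟨by omega, by omega⟩, f p,
      walk_mem_cls hw hw f h0 hL he (by omega), hsub⟩⟩

/-- the gcd of short closed-walk lengths divides every closed-walk length at v -/
lemma gcd_cw_dvd {v : Fin n} : ∀ k, 0 < k → HasWalk E v v k → (cw E v).gcd id ∣ k := by
  intro k
  induction k using Nat.strong_induction_on with
  | _ k ih =>
    intro hk hwalk
    set c := (cls E v).card with hc
    obtain ⟨f, h0, hL, he⟩ := hwalk
    by_cases hkc : k ≤ c
    · have : k ∈ cw E v := mem_cw.2 ⟨⟨hk, hkc⟩, v, sameC_refl v, ⟨f, h0, hL, he⟩⟩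
      simpa using Finset.gcd_dvd (f := (id : ℕ → ℕ)) this
    · obtain ⟨p, q, hpq, hqc, heq⟩ := walk_repeat (cls E v) rfl f
        (fun i hi => mem_cls.2 (walk_mem_cls (sameC_refl v) (sameC_refl v) f h0 hL he (by omega)))
      have hsub : HasWalk E (f p) (f q) (q - p) := hw_sub f he (le_of_lt hpq) (by omega)
      rw [← heq] at hsub
      have hmem : (q - p) ∈ cw E v := mem_cw.2 ⟨⟨by omega, by omega⟩, f p,
        walk_mem_cls (sameC_refl v) (sameC_refl v) f h0 hL he (by omega), hsub⟩
      have h1 : (cw E v).gcd id ∣ q - p := by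
        simpa using Finset.gcd_dvd (f := (id : ℕ → ℕ)) hmem
      have hw' : HasWalk E v v (k - (q - p)) := hw_splice f h0 hL he (le_of_lt hpq) (by omega) heq
      have h2 : (cw E v).gcd id ∣ k - (q - p) := ih (k - (q - p)) (by omega) (by omega) hw'
      have : k = (k - (q - p)) + (q - p) := by omega
      rw [this]
      exact Nat.dvd_add h2 h1

lemma gcd_cw_eq_one {v : Fin n} (hap : AperiodicAt E v) : (cw E v).gcd id = 1 :=
  hap _ (fun k hk hw => gcd_cw_dvd k hk hw)

lemma cw_nonempty {v : Fin n} (hap : AperiodicAt E v) : (cw E v).Nonempty := by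
  obtain ⟨k, hk, hw⟩ := exists_closed hap
  exact exists_short_closed (sameC_refl v) hk hw

end Classes

lemma cong_exists (a g0 N : ℕ) (hg0 : 0 < g0) (hdvd : Nat.gcd a g0 ∣ N) :
    ∃ y : ℕ, y < g0 / (Nat.gcd a g0) ∧ (g0 : ℤ) ∣ (N : ℤ) - y * a := by
  set g' := Nat.gcd a g0 with hg'
  have hg'pos : 0 < g' := Nat.gcd_pos_of_pos_right a hg0
  have hg'g0 : g' ∣ g0 := Nat.gcd_dvd_right a g0
  have hg'a : g' ∣ a := Nat.gcd_dvd_left a g0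
  set d := g0 / g' with hd
  have hg0d : g0 = g' * d := (Nat.mul_div_cancel' hg'g0).symm
  have hdpos : 0 < d := by
    rcases Nat.eq_zero_or_pos d with h | h
    · rw [h, Nat.mul_zero] at hg0d; omega
    · exact h
  have hbez : (g' : ℤ) = a * Nat.gcdA a g0 + g0 * Nat.gcdB a g0 := Nat.gcd_eq_gcd_ab a g0
  obtain ⟨N', hN'⟩ := hdvd
  set z : ℤ := Nat.gcdA a g0 * N' with hz
  set y : ℤ := z % d with hy
  have hdz : (d : ℤ) ≠ 0 := by exact_mod_cast hdpos.ne'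
  have hy0 : 0 ≤ y := Int.emod_nonneg z hdz
  have hyd : y < d := Int.emod_lt_of_pos z (by exact_mod_cast hdpos)
  refine ⟨y.toNat, by omega, ?_⟩
  have hyt : (y.toNat : ℤ) = y := Int.toNat_of_nonneg hy0
  rw [hyt]
  have h1 : (g0 : ℤ) ∣ (N : ℤ) - z * a := by
    have hNZ : (N : ℤ) = g' * N' := by exact_mod_cast hN'
    have : (N : ℤ) - z * a = N' * ((g' : ℤ) - a * Nat.gcdA a g0) := by
      rw [hNZ, hz]; ring
    rw [this, hbez]
    exact ⟨N' * Nat.gcdB a g0, by ring⟩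
  have h2 : (g0 : ℤ) ∣ (z - y) * a := by
    obtain ⟨a'', ha''⟩ := hg'a
    have hzy : z - y = d * (z / d) := by
      have := Int.mul_ediv_add_emod z d
      omega
    refine ⟨(z / d) * a'', ?_⟩
    rw [hzy, ha'', hg0d]
    push_cast
    ring
  have : (N : ℤ) - y * a = ((N : ℤ) - z * a) + (z - y) * a := by ring
  rw [this]
  exact dvd_add h1 h2

lemma brauer_rep (c : ℕ) (S : Finset ℕ) (hle : ∀ a ∈ S, a ≤ c)
    (a1 : ℕ) (ha1S : a1 ∈ S) (ha1pos : 0 < a1) :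
    ∀ (T : Finset ℕ), T ⊆ S → a1 ∈ T → ∀ N, T.gcd id ∣ N → (a1 - T.gcd id) * c ≤ N →
    ∃ m : ℕ → ℕ, ∑ x ∈ S, m x * x = N := by
  intro T
  induction T using Finset.strongInduction with
  | _ T ih =>
    intro hTS ha1T N hgdvd hgle
    by_cases hTsing : T = {a1}
    · subst hTsing
      rw [Finset.gcd_singleton] at hgdvd
      simp only [id] at hgdvd
      obtain ⟨N', hN'⟩ := hgdvd
      refine ⟨fun b => if b = a1 then N' else 0, ?_⟩
      have : ∀ x ∈ S, (if x = a1 then N' else 0) * x = if x = a1 then N' * a1 else 0 := by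
        intro x hx; split <;> simp_all
      rw [Finset.sum_congr rfl this, Finset.sum_ite_eq' S a1 (fun _ => N' * a1)]
      simp [ha1S, hN', Nat.mul_comm]
    · -- pick a ∈ T, a ≠ a1
      have hex : ∃ a ∈ T, a ≠ a1 := by
        by_contra h
        push_neg at h
        exact hTsing (Finset.eq_singleton_iff_unique_mem.2 ⟨ha1T, fun x hx => h x hx⟩)
      obtain ⟨a, haT, hane⟩ := hex
      set T0 := T.erase a with hT0
      have ha1T0 : a1 ∈ T0 := Finset.mem_erase.2 ⟨fun h => hane h.symm, ha1T⟩
      have hT0sub : T0 ⊂ T := Finset.erase_ssubset haT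
      set g' := T.gcd id with hg'
      set g0 := T0.gcd id with hg0
      have hins : insert a T0 = T := Finset.insert_erase haT
      have hgins : g' = Nat.gcd a g0 := by
        rw [hg', ← hins, Finset.gcd_insert]
        rfl
      have hg'g0 : g' ∣ g0 := by
        refine Finset.dvd_gcd fun b hb => ?_
        simpa using Finset.gcd_dvd (f := (id : ℕ → ℕ)) (Finset.mem_of_mem_erase hb)
      have hg0a1 : g0 ∣ a1 := by simpa using Finset.gcd_dvd (f := (id : ℕ → ℕ)) ha1T0
      have hg0pos : 0 < g0 := Nat.pos_of_dvd_of_pos hg0a1 ha1pos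
      have hg'pos : 0 < g' := by
        rw [hgins]; exact Nat.gcd_pos_of_pos_right a hg0pos
      by_cases hgeq : g0 = g'
      · exact ih T0 hT0sub (fun b hb => hTS (Finset.mem_of_mem_erase hb)) ha1T0 N
          (by rw [← hg0, hgeq]; exact hgdvd) (by rw [← hg0, hgeq]; exact hgle)
      · have hg'lt : g' < g0 := Nat.lt_of_le_of_ne (Nat.le_of_dvd hg0pos hg'g0) (Ne.symm hgeq)
        obtain ⟨y, hyd, hydvd⟩ := cong_exists a g0 N hg0pos (by rw [← hgins]; exact hgdvd)
        set d := g0 / (Nat.gcd a g0) with hd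
        have hgag0 : Nat.gcd a g0 = g' := hgins.symm
        have hgd : g0 = g' * d := by
          rw [hd, hgag0]; exact (Nat.mul_div_cancel' hg'g0).symm
        have hac : a ≤ c := hle a (hTS haT)
        have hg0a1' : g0 ≤ a1 := Nat.le_of_dvd ha1pos hg0a1
        -- y * a ≤ (g0 - g') * c
        have hya : y * a ≤ (g0 - g') * c := by
          have h1 : y ≤ d - 1 := by omega
          have k1 : g' * (d - 1) + g' * 1 = g' * d := by rw [← Nat.mul_add]; congr 1; omega
          have k2 : d - 1 ≤ g' * (d - 1) := Nat.le_mul_of_pos_left _ hg'pos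
          have h2 : d - 1 ≤ g0 - g' := by omega
          calc y * a ≤ (d - 1) * c := Nat.mul_le_mul h1 hac
            _ ≤ (g0 - g') * c := Nat.mul_le_mul_right c h2
        have hsplit : (a1 - g') * c = (a1 - g0) * c + (g0 - g') * c := by
          have : a1 - g' = (a1 - g0) + (g0 - g') := by omega
          rw [this, Nat.add_mul]
        have hyaN : y * a ≤ N := by omega
        have hg0N' : g0 ∣ N - y * a := by
          have : ((N - y * a : ℕ) : ℤ) = (N : ℤ) - y * a := by push_cast; omega
          exact_mod_cast (by rw [this]; exact hydvd : (g0 : ℤ) ∣ ((N - y * a : ℕ) : ℤ))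
        have hle' : (a1 - g0) * c ≤ N - y * a := by omega
        obtain ⟨m0, hm0⟩ := ih T0 hT0sub (fun b hb => hTS (Finset.mem_of_mem_erase hb))
          ha1T0 (N - y * a) hg0N' hle'
        refine ⟨fun b => if b = a then m0 b + y else m0 b, ?_⟩
        have hsummand : ∀ x ∈ S, (if x = a then m0 x + y else m0 x) * x
            = m0 x * x + (if x = a then y * a else 0) := by
          intro x hx
          split
          · next h => subst h; ring
          · ring
        rw [Finset.sum_congr rfl hsummand, Finset.sum_add_distrib,
          Finset.sum_ite_eq' S a (fun _ => y * a), if_pos (hTS haT), hm0]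
        omega



section Realize
attribute [local instance] Classical.propDecidable
variable {n : ℕ} {E : Fin n → Fin n → Prop}

lemma realize {v : Fin n} (l : List ℕ)
    (hl : ∀ a ∈ l, ∃ w, SameC E w v ∧ HasWalk E w w a) :
    ∀ u u', SameC E u v → SameC E u' v →
    ∃ d, d ≤ (l.length + 1) * ((cls E v).card - 1) ∧
      ∀ m : ℕ → ℕ, HasWalk E u u' (d + (l.map (fun a => m a * a)).sum) := by
  induction l with
  | nil =>
    intro u u' hu hu'
    obtain ⟨d, hd, hw⟩ := exists_short_walk hu hu'
    exact ⟨d, by simpa using hd, fun m => by simpa using hw⟩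
  | cons a l ih =>
    intro u u' hu hu'
    obtain ⟨w, hwv, hww⟩ := hl a List.mem_cons_self
    obtain ⟨d1, hd1, hw1⟩ := exists_short_walk hu hwv
    obtain ⟨d', hd', hwrec⟩ := ih (fun b hb => hl b (List.mem_cons_of_mem a hb)) w u' hwv hu'
    refine ⟨d1 + d', ?_, ?_⟩
    · have hmul : (l.length + 1 + 1) * ((cls E v).card - 1)
          = (l.length + 1) * ((cls E v).card - 1) + ((cls E v).card - 1) := by ring
      simp only [List.length_cons]
      omega
    · intro m
      have wk : HasWalk E u u' (d1 + (m a * a + (d' + (l.map (fun b => m b * b)).sum))) :=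
        hw_trans hw1 (hw_trans (hw_iterate hww (m a)) (hwrec m))
      refine hw_congr wk ?_
      simp only [List.map_cons, List.sum_cons]
      ring

lemma walk_exact {v : Fin n} (hap : ∀ i : Fin n, AperiodicAt E i) {u u' : Fin n}
    (hu : SameC E u v) (hu' : SameC E u' v) {L : ℕ}
    (hL : ((cls E v).card - 1) * (2 * (cls E v).card + 1) ≤ L) :
    HasWalk E u u' L := by
  set c := (cls E v).card with hc
  have hcpos : 0 < c := cls_card_pos v
  have hSne : (cw E v).Nonempty := cw_nonempty (hap v)
  have hgcd : (cw E v).gcd id = 1 := gcd_cw_eq_one (hap v)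
  set a1 := (cw E v).min' hSne with ha1
  have ha1S : a1 ∈ cw E v := Finset.min'_mem _ _
  have ha1b : 1 ≤ a1 ∧ a1 ≤ c := (mem_cw.1 ha1S).1
  have hSle : ∀ a ∈ cw E v, a ≤ c := fun a ha => (mem_cw.1 ha).1.2
  have hcard : (cw E v).card ≤ c := by
    have hsub : cw E v ⊆ Finset.Icc 1 c := fun a ha => Finset.mem_Icc.2 (mem_cw.1 ha).1
    have := Finset.card_le_card hsub
    simpa [Nat.card_Icc] using this
  obtain ⟨d, hd, hwall⟩ := realize (cw E v).toList
    (fun a ha => (mem_cw.1 (by rwa [Finset.mem_toList] at ha)).2) u u' hu hu'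
  rw [Finset.length_toList] at hd
  have hdle : d ≤ (c + 1) * (c - 1) := by
    calc d ≤ ((cw E v).card + 1) * (c - 1) := hd
      _ ≤ (c + 1) * (c - 1) := Nat.mul_le_mul_right _ (by omega)
  have hsplit : (c - 1) * c + (c + 1) * (c - 1) = (c - 1) * (2 * c + 1) := by ring
  have hdL : d ≤ L := by
    have h1 : (c + 1) * (c - 1) ≤ (c - 1) * (2 * c + 1) := by omega
    omega
  have hNle : (a1 - (cw E v).gcd id) * c ≤ L - d := by
    rw [hgcd]
    have h1 : (a1 - 1) * c ≤ (c - 1) * c := Nat.mul_le_mul_right _ (by omega)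
    omega
  obtain ⟨m, hm⟩ := brauer_rep c (cw E v) hSle a1 ha1S (by omega) (cw E v)
    (Finset.Subset.refl _) ha1S (L - d) (by rw [hgcd]; exact one_dvd _) hNle
  have hw := hwall m
  have hsum : ((cw E v).toList.map (fun a => m a * a)).sum = ∑ x ∈ cw E v, m x * x :=
    Finset.sum_map_toList _ _
  rw [hsum, hm] at hw
  exact hw_congr hw (by omega)

end Realize


section MatrixDyn
attribute [local instance] Classical.propDecidable

variable {n : ℕ} {A : ℕ → Matrix (Fin n) (Fin n) ℝ} {α : ℝ}

variable (hst : ∀ k, 1 ≤ k → Stochastic (A k))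

include hst

lemma bp_nonneg : ∀ (t : ℕ) (u w : Fin n), 0 ≤ backProd A 0 t u w := by
  intro t
  induction t with
  | zero =>
    intro u w
    by_cases h : u = w <;> simp [backProd, Matrix.one_apply, h]
  | succ t ih =>
    intro u w
    show 0 ≤ (A (0 + t + 1) * backProd A 0 t) u w
    rw [Matrix.mul_apply]
    refine Finset.sum_nonneg fun z _ => mul_nonneg ((hst (0 + t + 1) (by omega)).1 u z) (ih z w)

lemma bp_rowsum : ∀ (t : ℕ) (u : Fin n), ∑ w, backProd A 0 t u w = 1 := by
  intro t
  induction t with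
  | zero =>
    intro u
    simp [backProd, Matrix.one_apply]
  | succ t ih =>
    intro u
    show ∑ w, (A (0 + t + 1) * backProd A 0 t) u w = 1
    simp only [Matrix.mul_apply]
    rw [Finset.sum_comm]
    have : ∀ z ∈ Finset.univ, ∑ w, A (0 + t + 1) u z * backProd A 0 t z w
        = A (0 + t + 1) u z := by
      intro z _
      rw [← Finset.mul_sum, ih z, mul_one]
    rw [Finset.sum_congr rfl this]
    exact (hst (0 + t + 1) (by omega)).2 u

omit hst in
lemma bp_succ (t : ℕ) (u w : Fin n) :
    backProd A 0 (t + 1) u w = ∑ z, A (t + 1) u z * backProd A 0 t z w := by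
  show (A (0 + t + 1) * backProd A 0 t) u w = _
  rw [Matrix.mul_apply]
  norm_num

/-- single-step lower bound through one entry -/
lemma step_ge (hα : 0 < α) (t : ℕ) (u z : Fin n) (hA : α ≤ A (t + 1) u z) (w : Fin n) :
    α * backProd A 0 t z w ≤ backProd A 0 (t + 1) u w := by
  rw [bp_succ]
  have h1 : α * backProd A 0 t z w ≤ A (t + 1) u z * backProd A 0 t z w :=
    mul_le_mul_of_nonneg_right hA (bp_nonneg hst t z w)
  refine le_trans h1 ?_
  exact Finset.single_le_sum (f := fun z' => A (t + 1) u z' * backProd A 0 t z' w)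
    (fun z' _ => mul_nonneg ((hst (t + 1) (by omega)).1 u z') (bp_nonneg hst t z' w))
    (Finset.mem_univ z)

/-- walk-based lower bound -/
lemma walk_ge (hα : 0 < α) {E : Fin n → Fin n → Prop}
    (hE : ∀ s, 1 ≤ s → ∀ u z, E u z → α ≤ A s u z) {u z : Fin n} {L : ℕ}
    (hw : HasWalk E u z L) (t : ℕ) (w : Fin n) :
    α ^ L * backProd A 0 t z w ≤ backProd A 0 (t + L) u w := by
  induction L generalizing u with
  | zero =>
    obtain ⟨f, h0, hL, _⟩ := hw
    rw [← h0, hL]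
    simp
  | succ L ih =>
    obtain ⟨f, h0, hL, he⟩ := hw
    have hw1 : HasWalk E (f 1) z L := by
      refine ⟨fun m => f (1 + m), rfl, ?_, ?_⟩
      · show f (1 + L) = z; rw [Nat.add_comm]; exact hL
      · intro m hm
        show E (f (1 + m)) (f (1 + (m + 1)))
        have : 1 + (m + 1) = (1 + m) + 1 := by omega
        rw [this]
        exact he (1 + m) (by omega)
    have ih1 := ih hw1
    have hedge : α ≤ A (t + L + 1) u (f 1) := by
      rw [← h0]
      exact hE (t + L + 1) (by omega) _ _ (he 0 (by omega))
    have hstep := step_ge hst hα (t + L) u (f 1) hedge w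
    have : t + (L + 1) = (t + L) + 1 := by omega
    rw [this]
    calc α ^ (L + 1) * backProd A 0 t z w = α * (α ^ L * backProd A 0 t z w) := by ring
      _ ≤ α * backProd A 0 (t + L) (f 1) w :=
        mul_le_mul_of_nonneg_left ih1 hα.le
      _ ≤ backProd A 0 ((t + L) + 1) u w := hstep

/-- preservation on a leak-free set -/
lemma preserve (j0 : Fin n) (U : Finset (Fin n)) (t : ℕ) {β : ℝ}
    (hnl : ∀ v ∈ U, ∀ w, w ∉ U → ¬ 0 < A (t + 1) v w)
    (hb : ∀ w ∈ U, β ≤ backProd A 0 t w j0) :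
    ∀ v ∈ U, β ≤ backProd A 0 (t + 1) v j0 := by
  intro v hv
  rw [bp_succ]
  have hz : ∀ w, w ∉ U → A (t + 1) v w = 0 := fun w hw =>
    le_antisymm (not_lt.1 (hnl v hv w hw)) ((hst (t + 1) (by omega)).1 v w)
  have hsum : ∑ z, A (t + 1) v z * backProd A 0 t z j0
      = ∑ z ∈ U, A (t + 1) v z * backProd A 0 t z j0 := by
    refine (Finset.sum_subset (Finset.subset_univ U) ?_).symm
    intro w _ hw
    rw [hz w hw, zero_mul]
  have hrow : ∑ z ∈ U, A (t + 1) v z = 1 := by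
    have h2 : ∑ z, A (t + 1) v z = ∑ z ∈ U, A (t + 1) v z := by
      refine (Finset.sum_subset (Finset.subset_univ U) ?_).symm
      intro w _ hw; exact hz w hw
    rw [← h2]; exact (hst (t + 1) (by omega)).2 v
  rw [hsum]
  calc β = β * ∑ z ∈ U, A (t + 1) v z := by rw [hrow, mul_one]
    _ = ∑ z ∈ U, β * A (t + 1) v z := by rw [Finset.mul_sum]
    _ ≤ ∑ z ∈ U, A (t + 1) v z * backProd A 0 t z j0 := by
        refine Finset.sum_le_sum fun z hzU => ?_
        rw [mul_comm]
        exact mul_le_mul_of_nonneg_left (hb z hzU) ((hst (t + 1) (by omega)).1 v z)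

/-- if no edge ever leaves U after time T, the block of the partial products vanishes -/
lemma block_zero (U : Finset (Fin n)) (T : ℕ)
    (hnl : ∀ s, T < s → ∀ v ∈ U, ∀ w, w ∉ U → ¬ 0 < A s v w) :
    ∀ m, ∀ u ∈ U, ∀ l, l ∉ U → backProd A T m u l = 0 := by
  intro m
  induction m with
  | zero =>
    intro u hu l hl
    have huL : u ≠ l := fun h => hl (h ▸ hu)
    simp [backProd, Matrix.one_apply, huL]
  | succ m ih =>
    intro u hu l hl
    show (A (T + m + 1) * backProd A T m) u l = 0
    rw [Matrix.mul_apply]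
    refine Finset.sum_eq_zero fun z _ => ?_
    by_cases hzU : z ∈ U
    · rw [ih z hzU l hl, mul_zero]
    · have : A (T + m + 1) u z = 0 :=
        le_antisymm (not_lt.1 (hnl (T + m + 1) (by omega) u hu z hzU))
          ((hst (T + m + 1) (by omega)).1 u z)
      rw [this, zero_mul]

omit hst in
/-- a walk from outside U to inside U crosses into U -/
lemma crossing {U : Finset (Fin n)} {E' : Fin n → Fin n → Prop} (f : ℕ → Fin n) {p : ℕ}
    (he : ∀ m < p, E' (f m) (f (m + 1))) (h0 : f 0 ∉ U) (hp : f p ∈ U) :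
    ∃ r, r < p ∧ f r ∉ U ∧ f (r + 1) ∈ U ∧ E' (f r) (f (r + 1)) := by
  have hQ : ∃ i, f i ∈ U := ⟨p, hp⟩
  have hr'spec : f (Nat.find hQ) ∈ U := Nat.find_spec hQ
  have hr'le : Nat.find hQ ≤ p := Nat.find_le hp
  have hr'pos : 0 < Nat.find hQ := by
    rcases Nat.eq_zero_or_pos (Nat.find hQ) with h | h
    · rw [h] at hr'spec; exact absurd hr'spec h0
    · exact h
  have hrmin : f (Nat.find hQ - 1) ∉ U := Nat.find_min hQ (by omega)
  have hrp : Nat.find hQ - 1 < p := by omega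
  have hplus : Nat.find hQ - 1 + 1 = Nat.find hQ := by omega
  exact ⟨Nat.find hQ - 1, hrp, hrmin, by rw [hplus]; exact hr'spec, he _ hrp⟩

end MatrixDyn


section MainRec
attribute [local instance] Classical.propDecidable

variable {n : ℕ} {A : ℕ → Matrix (Fin n) (Fin n) ℝ} {H : Fin n → Fin n → Prop} {α : ℝ}

/-- once a uniform lower bound holds at one time for all states, it holds forever after -/
lemma univ_forever (hst : ∀ k, 1 ≤ k → Stochastic (A k)) (j0 : Fin n) {β : ℝ} (T : ℕ)
    (hb : ∀ v, β ≤ backProd A 0 T v j0) :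
    ∀ t, T ≤ t → ∀ v, β ≤ backProd A 0 t v j0 := by
  have key : ∀ dt, ∀ v, β ≤ backProd A 0 (T + dt) v j0 := by
    intro dt
    induction dt with
    | zero => simpa using hb
    | succ dt ih =>
      intro v
      exact preserve hst j0 Finset.univ (T + dt)
        (fun v' _ w hw => absurd (Finset.mem_univ w) hw)
        (fun w _ => ih w) v (Finset.mem_univ v)
  intro t ht v
  have : T + (t - T) = t := by omega
  rw [← this]
  exact key (t - T) v

lemma main_rec (hα : 0 < α) (hα1 : α ≤ 1)
    (hst : ∀ k, 1 ≤ k → Stochastic (A k))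
    (hlb : ∀ k, 1 ≤ k → ∀ i j, 0 < A k i j → α ≤ A k i j)
    (hep : ∀ k, 1 ≤ k → ∃ K, k ≤ K ∧
      ∀ i j, 0 < (∑ k' ∈ Finset.Icc k K, backProd A (k - 1) (k' + 1 - k)) i j)
    (hcr : ∀ k, 1 ≤ k → ∀ i j, 0 < A k i j → ∃ p, HasWalk (fun a b => 0 < A k a b) j i p)
    (hsub : ∀ k, 1 ≤ k → ∀ i j, H i j → 0 < A k i j)
    (hap : ∀ i : Fin n, AperiodicAt H i) (j0 : Fin n) :
    ∀ (fuel : ℕ) (U : Finset (Fin n)) (T e : ℕ),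
      n - U.card ≤ fuel → U.Nonempty →
      (∀ v ∈ U, ∀ w, SameC H w v → w ∈ U) →
      (∀ v ∈ U, α ^ e ≤ backProd A 0 T v j0) →
      ∃ T', ∀ t, T' ≤ t → ∀ v,
        α ^ (e + (2 * n + 1) * (n - U.card)) ≤ backProd A 0 t v j0 := by
  intro fuel
  induction fuel with
  | zero =>
    intro U T e hfuel hne hclosed hb
    have hUuniv : U = Finset.univ := by
      have h1 : U.card ≤ n := by
        have := Finset.card_le_univ U
        simpa using this
      have h2 : n ≤ U.card := by omega
      exact Finset.eq_univ_of_card U (by simp; omega)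
    subst hUuniv
    have hzero : n - (Finset.univ : Finset (Fin n)).card = 0 := by simp
    rw [hzero, Nat.mul_zero, Nat.add_zero]
    exact ⟨T, univ_forever hst j0 T (fun v => hb v (Finset.mem_univ v))⟩
  | succ fuel ih =>
    intro U T e hfuel hne hclosed hb
    by_cases hUuniv : U = Finset.univ
    · subst hUuniv
      have hzero : n - (Finset.univ : Finset (Fin n)).card = 0 := by simp
      rw [hzero, Nat.mul_zero, Nat.add_zero]
      exact ⟨T, univ_forever hst j0 T (fun v => hb v (Finset.mem_univ v))⟩
    · have hUlt : U.card < n := by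
        have h1 := Finset.card_lt_card (Finset.ssubset_univ_iff.2 hUuniv)
        simpa using h1
      -- there must be a leak after time T
      have hPex : ∃ s, T < s ∧ ∃ v, v ∈ U ∧ ∃ w, w ∉ U ∧ 0 < A s v w := by
        by_contra hno
        push_neg at hno
        obtain ⟨u0, hu0⟩ := hne
        have hex_out : ∃ w, w ∉ U := by
          by_contra h
          push_neg at h
          exact hUuniv (Finset.eq_univ_iff_forall.2 h)
        obtain ⟨l0, hl0⟩ := hex_out
        obtain ⟨K, hK, hpos⟩ := hep (T + 1) (by omega)
        have hzero : ∀ k' ∈ Finset.Icc (T + 1) K,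
            backProd A (T + 1 - 1) (k' + 1 - (T + 1)) u0 l0 = 0 := by
          intro k' _
          have hT1 : T + 1 - 1 = T := by omega
          rw [hT1]
          exact block_zero hst U T (fun s hs v hv w hw => not_lt.2 (hno s hs v hv w hw))
            (k' + 1 - (T + 1)) u0 hu0 l0 hl0
        have hcontra := hpos u0 l0
        rw [Matrix.sum_apply] at hcontra
        rw [Finset.sum_eq_zero hzero] at hcontra
        exact lt_irrefl 0 hcontra
      -- first leak time
      set s0 := Nat.find hPex with hs0def
      obtain ⟨hTs0, v1, hv1U, w1, hw1U, hA1⟩ := Nat.find_spec hPex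
      have hphase1 : ∀ dt, T + dt < s0 → ∀ v ∈ U, α ^ e ≤ backProd A 0 (T + dt) v j0 := by
        intro dt
        induction dt with
        | zero => intro _ v hv; exact hb v hv
        | succ dt ihd =>
          intro hlt v hv
          have hnoleak := Nat.find_min hPex (m := T + dt + 1) (by omega)
          push_neg at hnoleak
          have hnl : ∀ v' ∈ U, ∀ w, w ∉ U → ¬ 0 < A (T + dt + 1) v' w := by
            intro v' hv' w hw
            exact not_lt.2 (hnoleak (by omega) v' hv' w hw)
          exact preserve hst j0 U (T + dt) hnl (fun w hw => ihd (by omega) w hw) v hv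
      have hbnd1 : ∀ v ∈ U, α ^ e ≤ backProd A 0 (s0 - 1) v j0 := by
        intro v hv
        have heq : T + (s0 - 1 - T) = s0 - 1 := by omega
        have := hphase1 (s0 - 1 - T) (by omega) v hv
        rwa [heq] at this
      have hs0pos : 1 ≤ s0 := by omega
      have hs0succ : s0 - 1 + 1 = s0 := by omega
      -- everything in U keeps a bound (loses one α) at time s0
      have hbnd2 : ∀ v ∈ U, α ^ (e + 1) ≤ backProd A 0 s0 v j0 := by
        intro v hv
        obtain ⟨w, hvw, hwc⟩ := exists_nbr_in_cls (hap v)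
        have hwU : w ∈ U := hclosed v hv w hwc
        have hA : α ≤ A (s0 - 1 + 1) v w := by
          rw [hs0succ]
          exact hlb s0 hs0pos v w (hsub s0 hs0pos v w hvw)
        have hkey := step_ge hst hα (s0 - 1) v w hA j0
        rw [hs0succ] at hkey
        calc α ^ (e + 1) = α * α ^ e := by ring
          _ ≤ α * backProd A 0 (s0 - 1) w j0 :=
            mul_le_mul_of_nonneg_left (hbnd1 w hwU) hα.le
          _ ≤ backProd A 0 s0 v j0 := hkey
      -- crossing edge into U at time s0
      obtain ⟨p, g, hg0, hgp, hge⟩ := hcr s0 hs0pos v1 w1 hA1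
      have hg0U : g 0 ∉ U := by rw [hg0]; exact hw1U
      have hgpU : g p ∈ U := by rw [hgp]; exact hv1U
      obtain ⟨r, hrp, haU, hbU, hab⟩ :=
        crossing (E' := fun a b => 0 < A s0 a b) g hge hg0U hgpU
      -- the seed: vertex (g r) outside U gets a good value at time s0
      have hbnda : α ^ (e + 1) ≤ backProd A 0 s0 (g r) j0 := by
        have hA' : α ≤ A (s0 - 1 + 1) (g r) (g (r + 1)) := by
          rw [hs0succ]
          exact hlb s0 hs0pos _ _ hab
        have hkey := step_ge hst hα (s0 - 1) (g r) (g (r + 1)) hA' j0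
        rw [hs0succ] at hkey
        calc α ^ (e + 1) = α * α ^ e := by ring
          _ ≤ α * backProd A 0 (s0 - 1) (g (r + 1)) j0 :=
            mul_le_mul_of_nonneg_left (hbnd1 _ hbU) hα.le
          _ ≤ backProd A 0 s0 (g r) j0 := hkey
      -- spread through the class of (g r)
      set a := g r with hadef
      set ca := (cls H a).card with hcadef
      set fa := (ca - 1) * (2 * ca + 1) with hfadef
      have hspread : ∀ u' ∈ cls H a, α ^ (e + 1 + fa) ≤ backProd A 0 (s0 + fa) u' j0 := by
        intro u' hu'
        have hwlk : HasWalk H u' a fa :=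
          walk_exact hap (mem_cls.1 hu') (sameC_refl a) (le_refl _)
        have hw := walk_ge hst hα (fun s hs u z huz => hlb s hs u z (hsub s hs u z huz))
          hwlk s0 j0
        calc α ^ (e + 1 + fa) = α ^ fa * α ^ (e + 1) := by ring
          _ ≤ α ^ fa * backProd A 0 s0 a j0 :=
            mul_le_mul_of_nonneg_left hbnda (pow_nonneg hα.le _)
          _ ≤ backProd A 0 (s0 + fa) u' j0 := hw
      -- decay on U during the spreading window
      have hdecay : ∀ dt, dt ≤ fa → ∀ v ∈ U, α ^ (e + 1 + dt) ≤ backProd A 0 (s0 + dt) v j0 := by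
        intro dt
        induction dt with
        | zero => intro _ v hv; exact hbnd2 v hv
        | succ dt ihd =>
          intro hdt v hv
          obtain ⟨w, hvw, hwc⟩ := exists_nbr_in_cls (hap v)
          have hwU : w ∈ U := hclosed v hv w hwc
          have hA' : α ≤ A (s0 + dt + 1) v w :=
            hlb _ (by omega) _ _ (hsub _ (by omega) _ _ hvw)
          have hkey := step_ge hst hα (s0 + dt) v w hA' j0
          calc α ^ (e + 1 + (dt + 1)) = α * α ^ (e + 1 + dt) := by ring
            _ ≤ α * backProd A 0 (s0 + dt) w j0 :=
              mul_le_mul_of_nonneg_left (ihd (by omega) w hwU) hα.le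
            _ ≤ backProd A 0 (s0 + dt + 1) v j0 := hkey
      -- the enlarged set
      have haU' : a ∈ cls H a := self_mem_cls a
      have hdisj : Disjoint U (cls H a) := by
        rw [Finset.disjoint_left]
        intro x hxU hxa
        exact haU (hclosed x hxU a (sameC_symm (mem_cls.1 hxa)))
      have hcard' : (U ∪ cls H a).card = U.card + ca :=
        Finset.card_union_of_disjoint hdisj
      have hcaPos : 0 < ca := cls_card_pos a
      have hcale : ca ≤ n := by
        have := Finset.card_le_univ (cls H a)
        simpa using this
      have hcardle : (U ∪ cls H a).card ≤ n := by
        have := Finset.card_le_univ (U ∪ cls H a)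
        simpa using this
      have hclosed' : ∀ v ∈ U ∪ cls H a, ∀ w, SameC H w v → w ∈ U ∪ cls H a := by
        intro v hv w hwv
        rcases Finset.mem_union.1 hv with h | h
        · exact Finset.mem_union_left _ (hclosed v h w hwv)
        · exact Finset.mem_union_right _ (mem_cls.2 (sameC_trans hwv (mem_cls.1 h)))
      have hbU' : ∀ v ∈ U ∪ cls H a, α ^ (e + 1 + fa) ≤ backProd A 0 (s0 + fa) v j0 := by
        intro v hv
        rcases Finset.mem_union.1 hv with h | h
        · exact hdecay fa (le_refl _) v h
        · exact hspread v h
      obtain ⟨T', hT'⟩ := ih (U ∪ cls H a) (s0 + fa) (e + 1 + fa) (by omega)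
        ⟨a, Finset.mem_union_right _ haU'⟩ hclosed' hbU'
      refine ⟨T', fun t ht v => ?_⟩
      have h1 := hT' t ht v
      have hfa_le : fa ≤ (2 * n + 1) * (ca - 1) := by
        have h2 : 2 * ca + 1 ≤ 2 * n + 1 := by omega
        calc fa = (ca - 1) * (2 * ca + 1) := hfadef
          _ ≤ (ca - 1) * (2 * n + 1) := Nat.mul_le_mul_left _ h2
          _ = (2 * n + 1) * (ca - 1) := Nat.mul_comm _ _
      have hUc : n - (U ∪ cls H a).card = n - U.card - ca := by omega
      rw [hUc] at h1
      have hexp : e + 1 + fa + (2 * n + 1) * (n - U.card - ca)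
          ≤ e + (2 * n + 1) * (n - U.card) := by
        have hZY : (2 * n + 1) * (ca - 1) + (2 * n + 1) * (n - U.card - ca)
            ≤ (2 * n + 1) * (n - U.card - 1) := by
          rw [← Nat.mul_add]
          exact Nat.mul_le_mul_left _ (by omega)
        have hfin : (2 * n + 1) * (n - U.card - 1) + (2 * n + 1)
            ≤ (2 * n + 1) * (n - U.card) := by
          have hh := Nat.mul_le_mul_left (2 * n + 1)
            (show (n - U.card - 1) + 1 ≤ n - U.card by omega)
          rwa [Nat.mul_succ] at hh
        omega
      calc α ^ (e + (2 * n + 1) * (n - U.card))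
          ≤ α ^ (e + 1 + fa + (2 * n + 1) * (n - U.card - ca)) :=
            pow_le_pow_of_le_one hα.le hα1 hexp
        _ ≤ backProd A 0 t v j0 := h1

end MainRec

section Final

lemma key_ineq (n : ℕ) (hn : 1 ≤ n) : (2 * n + 1) * (n - 1) ≤ n * (n ^ 2 + 3 - 2 * n) := by
  obtain ⟨m, rfl⟩ : ∃ m, n = m + 1 := ⟨n - 1, by omega⟩
  have h1 : (m + 1) ^ 2 + 3 - 2 * (m + 1) = m ^ 2 + 2 := by
    have : (m + 1) ^ 2 + 3 = m ^ 2 + 2 + 2 * (m + 1) := by ring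
    omega
  rw [h1]
  have h2 : (2 * (m + 1) + 1) * ((m + 1) - 1) = 2 * m ^ 2 + 3 * m := by
    have hm : (m + 1) - 1 = m := by omega
    rw [hm]; ring
  rw [h2]
  have h3 : (m + 1) * (m ^ 2 + 2) = m ^ 3 + m ^ 2 + 2 * m + 2 := by ring
  rw [h3]
  rcases Nat.lt_or_ge m 2 with h | h
  · interval_cases m <;> norm_num
  · have h4 : 2 * (m * m) ≤ m * (m * m) := Nat.mul_le_mul_right _ h
    have h5 : m ≤ m * m := Nat.le_mul_of_pos_left m (by omega)
    have e1 : m ^ 2 = m * m := sq m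
    have e2 : m ^ 3 = m * (m * m) := by ring
    omega

end Final

end S15

open S15 in
theorem stmt15 {n : ℕ} (A : ℕ → Matrix (Fin n) (Fin n) ℝ)
    (H : Fin n → Fin n → Prop) (α : ℝ) (hα : 0 < α)
    (hstoch : ∀ k, 1 ≤ k → Stochastic (A k))
    (hlb : ∀ k, 1 ≤ k → ∀ i j, 0 < A k i j → α ≤ A k i j)
    (hep : ∀ k, 1 ≤ k → ∃ K, k ≤ K ∧
      ∀ i j, 0 < (∑ k' ∈ Finset.Icc k K, backProd A (k - 1) (k' + 1 - k)) i j)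
    (hcr : ∀ k, 1 ≤ k → CompRed (A k))
    (hsub : ∀ k, 1 ≤ k → ∀ i j, H i j → 0 < A k i j)
    (hns : ∀ i : Fin n, ∃ j, H i j)
    (hap : ∀ i : Fin n, AperiodicAt H i) :
    ∃ K, ∀ k, K ≤ k → ∀ i j, α ^ (n * (n ^ 2 + 3 - 2 * n)) ≤ backProd A 0 k i j := by
  rcases Nat.eq_zero_or_pos n with hn0 | hn
  · subst hn0
    exact ⟨0, fun k _ i _ => i.elim0⟩
  · -- α ≤ 1
    have hα1 : α ≤ 1 := by
      have hrow := (hstoch 1 le_rfl).2 ⟨0, hn⟩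
      have hex : ∃ w, 0 < A 1 ⟨0, hn⟩ w := by
        by_contra h
        push_neg at h
        have hle : ∑ w, A 1 ⟨0, hn⟩ w ≤ 0 := Finset.sum_nonpos fun w _ => h w
        rw [hrow] at hle
        norm_num at hle
      obtain ⟨w, hw⟩ := hex
      have h1 : α ≤ A 1 ⟨0, hn⟩ w := hlb 1 le_rfl _ w hw
      have h2 : A 1 ⟨0, hn⟩ w ≤ 1 := by
        rw [← hrow]
        exact Finset.single_le_sum (fun z _ => (hstoch 1 le_rfl).1 _ z) (Finset.mem_univ w)
      linarith
    have hall : ∀ j : Fin n, ∃ Tj, ∀ t, Tj ≤ t → ∀ v,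
        α ^ (n * (n ^ 2 + 3 - 2 * n)) ≤ backProd A 0 t v j := by
      intro j
      set cj := (cls H j).card with hcjdef
      set fj := (cj - 1) * (2 * cj + 1) with hfjdef
      have hcj1 : 1 ≤ cj := cls_card_pos j
      have hcjn : cj ≤ n := by
        have := Finset.card_le_univ (cls H j)
        simpa using this
      -- base bound on the class of j at time fj
      have hbase : ∀ v ∈ cls H j, α ^ fj ≤ backProd A 0 fj v j := by
        intro v hv
        have hwalk : HasWalk H v j fj :=
          walk_exact hap (mem_cls.1 hv) (sameC_refl j) (le_refl _)
        have hw := walk_ge hstoch hα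
          (fun s hs u z huz => hlb s hs u z (hsub s hs u z huz)) hwalk 0 j
        have hone : backProd A 0 0 j j = 1 := by
          show (1 : Matrix (Fin n) (Fin n) ℝ) j j = 1
          exact Matrix.one_apply_eq j
        rw [hone, mul_one, Nat.zero_add] at hw
        exact hw
      obtain ⟨Tj, hTj⟩ := main_rec hα hα1 hstoch hlb hep (fun k hk i j h => hcr k hk i j h) hsub hap j n (cls H j) fj fj
        (by omega) ⟨j, self_mem_cls j⟩
        (fun v hv w hwv => mem_cls.2 (sameC_trans hwv (mem_cls.1 hv))) hbase
      refine ⟨Tj, fun t ht v => ?_⟩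
      have h1 := hTj t ht v
      have hfj_le : fj ≤ (2 * n + 1) * (cj - 1) := by
        have h2 : 2 * cj + 1 ≤ 2 * n + 1 := by omega
        calc fj = (cj - 1) * (2 * cj + 1) := hfjdef
          _ ≤ (cj - 1) * (2 * n + 1) := Nat.mul_le_mul_left _ h2
          _ = (2 * n + 1) * (cj - 1) := Nat.mul_comm _ _
      have hsum : (2 * n + 1) * (cj - 1) + (2 * n + 1) * (n - cj)
          = (2 * n + 1) * (n - 1) := by
        rw [← Nat.mul_add]; congr 1; omega
      have hkey := key_ineq n hn
      have hexp : fj + (2 * n + 1) * (n - cj) ≤ n * (n ^ 2 + 3 - 2 * n) := by omega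
      calc α ^ (n * (n ^ 2 + 3 - 2 * n)) ≤ α ^ (fj + (2 * n + 1) * (n - cj)) :=
        pow_le_pow_of_le_one hα.le hα1 hexp
        _ ≤ backProd A 0 t v j := h1
    choose Tfun hTfun using hall
    refine ⟨Finset.univ.sup Tfun, fun k hk i j => ?_⟩
    exact hTfun j k (le_trans (Finset.le_sup (Finset.mem_univ j)) hk) i
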